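/- Let T : H × H → H be a compact self-adjoint symmetric bilinear operator possessing a Schmidt representation T(x,y) = Σⱼ τⱼ⟨x,xⱼ⟩⟨y,yⱼ⟩zⱼ where each nonzero τⱼ is an ordered singular value with ordered unit singular vectors (xⱼ, yⱼ, zⱼ). Then for each j with τⱼ > 0, yⱼ = ±xⱼ and zⱼ = ±xⱼ, and there exist signs εⱼ ∈ {±1} such that T(x,y) = Σⱼ εⱼτⱼ⟨x,xⱼ⟩⟨y,xⱼ⟩xⱼ for all x,y ∈ H (a Schur representation). -/

import Mathlib

open scoped RealInnerProductSpace


private lemma unit_eq_of_inner_one {H : Type*} [NormedAddCommGroup H] [InnerProductSpace ℝ H]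
    {u v : H} (hu : ‖u‖ = 1) (hv : ‖v‖ = 1) (h : ⟪u, v⟫ = 1) : v = u := by
  have h2 : ‖v - u‖ ^ 2 = 0 := by
    rw [norm_sub_sq_real, real_inner_comm, h, hu, hv]; ring
  have h3 : v - u = 0 := norm_eq_zero.mp (by
    have := (pow_eq_zero_iff (n := 2) (by norm_num)).mp h2
    exact this)
  exact sub_eq_zero.mp h3

private lemma unit_eq_neg_of_inner_neg_one {H : Type*} [NormedAddCommGroup H]
    [InnerProductSpace ℝ H] {u v : H} (hu : ‖u‖ = 1) (hv : ‖v‖ = 1) (h : ⟪u, v⟫ = -1) :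
    v = -u := by
  have := unit_eq_of_inner_one (u := -u) (v := v) (by simpa using hu) hv
    (by rw [inner_neg_left, h]; ring)
  exact this


theorem stmt_15 {H : Type*}
    [NormedAddCommGroup H] [InnerProductSpace ℝ H] [CompleteSpace H]
    [TopologicalSpace.SeparableSpace H]
    (T : H →L[ℝ] H →L[ℝ] H)
    (hcompact : IsCompact (closure ((fun p : H × H => T p.1 p.2) ''
      (Metric.closedBall 0 1 ×ˢ Metric.closedBall 0 1))))
    (hsymm : ∀ x y : H, T x y = T y x)
    (hsa1 : ∀ x y z : H, ⟪T x y, z⟫ = ⟪y, T x z⟫)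
    (hsa2 : ∀ x y z : H, ⟪T y x, z⟫ = ⟪y, T z x⟫)
    (τ : ℕ → ℝ) (hτ0 : ∀ j, 0 ≤ τ j) (hτ : Filter.Tendsto τ Filter.atTop (nhds 0))
    (x y z : ℕ → H)
    (hx : Orthonormal ℝ x) (hy : Orthonormal ℝ y) (hz : Orthonormal ℝ z)
    (hrep : ∀ (a b : H), HasSum (fun j => (τ j * ⟪a, x j⟫ * ⟪b, y j⟫) • z j) (T a b))
    (hsing : ∀ j, 0 < τ j →
      T (x j) (y j) = τ j • z j ∧
      ContinuousLinearMap.adjoint (T.flip (y j)) (z j) = τ j • x j ∧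
      ContinuousLinearMap.adjoint (T (x j)) (z j) = τ j • y j ∧
      (∀ a : H, T a (y j) = (τ j * ⟪a, x j⟫) • z j) ∧
      (∀ b : H, T (x j) b = (τ j * ⟪b, y j⟫) • z j) ∧
      (∀ b : H, ContinuousLinearMap.adjoint (T.flip b) (z j) = (τ j * ⟪b, y j⟫) • x j)) :
    (∀ j, 0 < τ j → (y j = x j ∨ y j = -x j) ∧ (z j = x j ∨ z j = -x j)) ∧
    ∃ ε : ℕ → ℝ, (∀ j, ε j = 1 ∨ ε j = -1) ∧
      ∀ (a b : H),
        HasSum (fun j => (ε j * τ j * ⟪a, x j⟫ * ⟪b, x j⟫) • x j) (T a b) := by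
  classical
  have key : ∀ j, 0 < τ j → (y j = x j ∨ y j = -x j) ∧ (z j = x j ∨ z j = -x j) := by
    intro j hj
    obtain ⟨h1, h2, h3, h4, h5, h6⟩ := hsing j hj
    have hτne : τ j ≠ 0 := ne_of_gt hj
    have hzz : ⟪z j, z j⟫ = (1:ℝ) := by
      rw [real_inner_self_eq_norm_sq, hz.1 j]; norm_num
    have hyy : ⟪y j, y j⟫ = (1:ℝ) := by
      rw [real_inner_self_eq_norm_sq, hy.1 j]; norm_num
    have hxx : ⟪x j, x j⟫ = (1:ℝ) := by
      rw [real_inner_self_eq_norm_sq, hx.1 j]; norm_num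
    have hyz : ⟪y j, z j⟫ = 1 ∨ ⟪y j, z j⟫ = -1 := by
      have h := hsa1 (x j) (y j) (z j)
      rw [h5 (y j), h5 (z j)] at h
      rw [real_inner_smul_left, real_inner_smul_right, hzz, hyy] at h
      have hcomm : ⟪y j, z j⟫ = ⟪z j, y j⟫ := real_inner_comm _ _
      have h' : ⟪y j, z j⟫ * ⟪y j, z j⟫ = 1 := by
        have := mul_left_cancel₀ hτne
          (by linear_combination -h + τ j * ⟪y j, z j⟫ * hcomm :
            τ j * (⟪y j, z j⟫ * ⟪y j, z j⟫) = τ j * 1)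
        linarith [this]
      exact mul_self_eq_one_iff.mp h'
    have hxz : ⟪x j, z j⟫ = 1 ∨ ⟪x j, z j⟫ = -1 := by
      have h := hsa2 (y j) (x j) (z j)
      rw [h4 (x j), h4 (z j)] at h
      rw [real_inner_smul_left, real_inner_smul_right, hzz, hxx] at h
      have hcomm : ⟪x j, z j⟫ = ⟪z j, x j⟫ := real_inner_comm _ _
      have h' : ⟪x j, z j⟫ * ⟪x j, z j⟫ = 1 := by
        have := mul_left_cancel₀ hτne
          (by linear_combination -h + τ j * ⟪x j, z j⟫ * hcomm :
            τ j * (⟪x j, z j⟫ * ⟪x j, z j⟫) = τ j * 1)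
        linarith [this]
      exact mul_self_eq_one_iff.mp h'
    have hz1 : z j = x j ∨ z j = -x j := by
      rcases hxz with h | h
      · exact Or.inl (unit_eq_of_inner_one (hx.1 j) (hz.1 j) h)
      · exact Or.inr (unit_eq_neg_of_inner_neg_one (hx.1 j) (hz.1 j) h)
    have hz2 : z j = y j ∨ z j = -y j := by
      rcases hyz with h | h
      · exact Or.inl (unit_eq_of_inner_one (hy.1 j) (hz.1 j) h)
      · exact Or.inr (unit_eq_neg_of_inner_neg_one (hy.1 j) (hz.1 j) h)
    refine ⟨?_, hz1⟩
    rcases hz1 with h1 | h1 <;> rcases hz2 with h2 | h2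
    · exact Or.inl (by rw [← h2, h1])
    · exact Or.inr (by rw [(h1 ▸ h2 : x j = -y j), neg_neg])
    · exact Or.inr (h2.symm.trans h1)
    · exact Or.inl (by
        have hx2 : -x j = -y j := h1 ▸ h2
        exact (neg_injective hx2).symm)

  refine ⟨key, ?_⟩
  refine ⟨fun j => if h : 0 < τ j then ⟪y j, x j⟫ * ⟪z j, x j⟫ else 1, ?_, ?_⟩
  · intro j
    by_cases h : 0 < τ j
    · simp only [dif_pos h]
      obtain ⟨hy1, hz1⟩ := key j h
      have hxx : ⟪x j, x j⟫ = (1:ℝ) := by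
        rw [real_inner_self_eq_norm_sq, hx.1 j]; norm_num
      rcases hy1 with hy1 | hy1 <;> rcases hz1 with hz1 | hz1 <;>
        rw [hy1, hz1] <;> simp [inner_neg_left, hxx, hx.1 j]
    · simp [dif_neg h]
  · intro a b
    have heq : (fun j => ((if h : 0 < τ j then ⟪y j, x j⟫ * ⟪z j, x j⟫ else 1) * τ j *
        ⟪a, x j⟫ * ⟪b, x j⟫) • x j) = fun j => (τ j * ⟪a, x j⟫ * ⟪b, y j⟫) • z j := by
      funext j
      by_cases h : 0 < τ j
      · simp only [dif_pos h]
        obtain ⟨hy1, hz1⟩ := key j h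
        have hxx : ⟪x j, x j⟫ = (1:ℝ) := by
          rw [real_inner_self_eq_norm_sq, hx.1 j]; norm_num
        rcases hy1 with hy1 | hy1 <;> rcases hz1 with hz1 | hz1 <;>
          rw [hy1, hz1] <;> simp [inner_neg_left, inner_neg_right, hxx, smul_neg, hx.1 j] <;>
          module
      · have hτz : τ j = 0 := le_antisymm (not_lt.mp h) (hτ0 j)
        simp [hτz]
    rw [heq]
    exact hrep a b
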